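/- The functions h₁ = 1/(u−v), h₂ = (1/2)(u+v)/(u−v), h₃ = uv/(u−v) on ℝ²_{u≠v} satisfy {h₁,h₂}_ω = −h₁, {h₁,h₃}_ω = −2h₂, {h₂,h₃}_ω = −h₃, where {f,g}_ω = (u−v)²(f_u g_v − f_v g_u) is the Poisson bracket induced by ω = (du∧dv)/(u−v)², and moreover h₁h₃ − h₂² = −1/4. -/

import Mathlib

/-- Poisson bracket induced by ω = (du∧dv)/(u−v)². -/
noncomputable def pbracket2R (f g : ℝ → ℝ → ℝ) (u v : ℝ) : ℝ :=
  (u - v) ^ 2 * (deriv (fun u' => f u' v) u * deriv (fun v' => g u v') v -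
    deriv (fun v' => f u v') v * deriv (fun u' => g u' v) u)

private lemma hd_gen (a b c u : ℝ) (h : u - c ≠ 0) :
    HasDerivAt (fun x => (a * x + b) / (x - c)) ((a * (u - c) - (a * u + b)) / (u - c) ^ 2) u := by
  have hn : HasDerivAt (fun x : ℝ => a * x + b) a u := by
    simpa using ((hasDerivAt_id u).const_mul a).add_const b
  have hd : HasDerivAt (fun x : ℝ => x - c) 1 u := (hasDerivAt_id u).sub_const c
  simpa using hn.fun_div hd h

private lemma hd_quad (c u : ℝ) (h : u - c ≠ 0) :
    HasDerivAt (fun x => x * c / (x - c)) ((c * (u - c) - u * c) / (u - c) ^ 2) u := by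
  have hn : HasDerivAt (fun x : ℝ => x * c) c u := by
    simpa using (hasDerivAt_id u).mul_const c
  have hd : HasDerivAt (fun x : ℝ => x - c) 1 u := (hasDerivAt_id u).sub_const c
  simpa using hn.fun_div hd h

theorem coupled_riccati_lh_brackets
    (h₁ h₂ h₃ : ℝ → ℝ → ℝ)
    (H1 : ∀ u v : ℝ, h₁ u v = 1 / (u - v))
    (H2 : ∀ u v : ℝ, h₂ u v = (1 / 2) * ((u + v) / (u - v)))
    (H3 : ∀ u v : ℝ, h₃ u v = u * v / (u - v)) :
    ∀ u v : ℝ, u ≠ v →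
      pbracket2R h₁ h₂ u v = -h₁ u v ∧
      pbracket2R h₁ h₃ u v = -2 * h₂ u v ∧
      pbracket2R h₂ h₃ u v = -h₃ u v ∧
      h₁ u v * h₃ u v - (h₂ u v) ^ 2 = -(1 / 4) := by
  intro u v huv
  have h : u - v ≠ 0 := sub_ne_zero.mpr huv
  have h' : v - u ≠ 0 := sub_ne_zero.mpr huv.symm
  -- ∂u h₁
  have d1u : deriv (fun u' => h₁ u' v) u = (0 * (u - v) - (0 * u + 1)) / (u - v) ^ 2 := by
    have := (hd_gen 0 1 v u h).deriv
    simp only [H1]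
    simpa using this
  -- ∂v h₁ : h₁ u v = 1/(u-v) = -( (0*v+1)/(v-u) )? Write as fun v' => (0*v'+1)... need /(u - v').
  have d1v : deriv (fun v' => h₁ u v') v = -((0 * (v - u) - (0 * v + 1)) / (v - u) ^ 2) := by
    have hh : (fun v' => h₁ u v') = fun v' => -((0 * v' + 1) / (v' - u)) := by
      funext v'
      rw [H1]
      by_cases hv : u - v' = 0
      · simp [hv, sub_eq_zero.mp hv]
      · have : v' - u ≠ 0 := fun hc => hv (by linarith [sub_eq_zero.mp hc])
        field_simp
        ring
    rw [hh]
    rw [deriv.fun_neg]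
    rw [(hd_gen 0 1 u v h').deriv]
  -- ∂u h₂
  have d2u : deriv (fun u' => h₂ u' v) u =
      (1/2) * ((1 * (u - v) - (1 * u + v)) / (u - v) ^ 2) := by
    have hh : (fun u' => h₂ u' v) = fun u' => (1/2) * ((1 * u' + v) / (u' - v)) := by
      funext u'; rw [H2]; ring_nf
    rw [hh, deriv_const_mul _ (hd_gen 1 v v u h).differentiableAt, (hd_gen 1 v v u h).deriv]
  -- ∂v h₂ : h₂ u v' = (1/2)((u+v')/(u-v')) = -(1/2)((v'+u)/(v'-u))
  have d2v : deriv (fun v' => h₂ u v') v =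
      -((1/2) * ((1 * (v - u) - (1 * v + u)) / (v - u) ^ 2)) := by
    have hh : (fun v' => h₂ u v') = fun v' => -((1/2) * ((1 * v' + u) / (v' - u))) := by
      funext v'
      rw [H2]
      by_cases hv : u - v' = 0
      · simp [hv, sub_eq_zero.mp hv]
      · have : v' - u ≠ 0 := fun hc => hv (by linarith [sub_eq_zero.mp hc])
        field_simp
        ring
    rw [hh, deriv.fun_neg, deriv_const_mul _ (hd_gen 1 u u v h').differentiableAt,
      (hd_gen 1 u u v h').deriv]
  -- ∂u h₃
  have d3u : deriv (fun u' => h₃ u' v) u = (v * (u - v) - u * v) / (u - v) ^ 2 := by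
    have hh : (fun u' => h₃ u' v) = fun u' => u' * v / (u' - v) := by
      funext u'; rw [H3]
    rw [hh, (hd_quad v u h).deriv]
  -- ∂v h₃ : u v'/(u - v') = -(v' * u/(v' - u))
  have d3v : deriv (fun v' => h₃ u v') v = -((u * (v - u) - v * u) / (v - u) ^ 2) := by
    have hh : (fun v' => h₃ u v') = fun v' => -(v' * u / (v' - u)) := by
      funext v'
      rw [H3]
      by_cases hv : u - v' = 0
      · simp [hv, sub_eq_zero.mp hv]
      · have : v' - u ≠ 0 := fun hc => hv (by linarith [sub_eq_zero.mp hc])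
        field_simp
        ring
    rw [hh, deriv.fun_neg, (hd_quad u v h').deriv]
  refine ⟨?_, ?_, ?_, ?_⟩
  · rw [pbracket2R, d1u, d1v, d2u, d2v, H1]
    field_simp
    ring
  · rw [pbracket2R, d1u, d1v, d3u, d3v, H2]
    field_simp
    ring
  · rw [pbracket2R, d2u, d2v, d3u, d3v, H3]
    field_simp
    ring
  · rw [H1, H2, H3]
    field_simp
    ring
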